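/- Let Z : ℝⁿ → (ℝⁿ →ₗ[ℝ] ℝⁿ) be continuously differentiable with Z(x) skew-adjoint for every x (i.e. ⟨Z(x)v, v⟩ = 0 for all v). Then for every initial position x₀ ∈ ℝⁿ and initial velocity v₀ ∈ ℝⁿ there exists a twice differentiable curve γ : ℝ → ℝⁿ, defined on all of ℝ, satisfying γ(0) = x₀, γ'(0) = v₀, and γ''(t) = Z(γ(t))(γ'(t)) for all t ∈ ℝ. In other words, magnetic geodesics exist for all time. -/

import Mathlib

open scoped RealInnerProductSpace

namespace MagneticGeodesicAux

open Set Metric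

variable {n : ℕ}

/-- The phase-space vector field of the magnetic geodesic equation. -/
def V (Z : EuclideanSpace ℝ (Fin n) → (EuclideanSpace ℝ (Fin n) →L[ℝ] EuclideanSpace ℝ (Fin n)))
    (p : EuclideanSpace ℝ (Fin n) × EuclideanSpace ℝ (Fin n)) :
    EuclideanSpace ℝ (Fin n) × EuclideanSpace ℝ (Fin n) :=
  (p.2, Z p.1 p.2)

lemma contDiff_V
    (Z : EuclideanSpace ℝ (Fin n) → (EuclideanSpace ℝ (Fin n) →L[ℝ] EuclideanSpace ℝ (Fin n)))
    (hZ : ContDiff ℝ 1 Z) : ContDiff ℝ 1 (V Z) :=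
  contDiff_snd.prodMk ((hZ.comp contDiff_fst).clm_apply contDiff_snd)

/-- `V Z` is Lipschitz on every closed ball. -/
lemma exists_lipschitzOnWith_V
    (Z : EuclideanSpace ℝ (Fin n) → (EuclideanSpace ℝ (Fin n) →L[ℝ] EuclideanSpace ℝ (Fin n)))
    (hZ : ContDiff ℝ 1 Z)
    (c : EuclideanSpace ℝ (Fin n) × EuclideanSpace ℝ (Fin n)) (R : ℝ) :
    ∃ K : NNReal, LipschitzOnWith K (V Z) (closedBall c R) := by
  have hV := contDiff_V Z hZ
  obtain ⟨C, hC⟩ : ∃ C, ∀ p ∈ closedBall c R, ‖fderiv ℝ (V Z) p‖ ≤ C :=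
    (isCompact_closedBall c R).exists_bound_of_continuousOn
      ((hV.continuous_fderiv one_ne_zero).continuousOn)
  refine ⟨Real.toNNReal C, (convex_closedBall _ _).lipschitzOnWith_of_nnnorm_fderiv_le
    (fun p _ => (hV.differentiable one_ne_zero) p) (fun p hp => ?_)⟩
  simp only [← NNReal.coe_le_coe, coe_nnnorm, Real.coe_toNNReal']
  exact (hC p hp).trans (le_max_left _ _)

/-- Existence of a solution of the magnetic geodesic system on `[-N, N]`, staying in an
explicit closed ball. -/
lemma exists_sol
    (Z : EuclideanSpace ℝ (Fin n) → (EuclideanSpace ℝ (Fin n) →L[ℝ] EuclideanSpace ℝ (Fin n)))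
    (hZ : ContDiff ℝ 1 Z)
    (hskew : ∀ (x v : EuclideanSpace ℝ (Fin n)), ⟪Z x v, v⟫ = 0)
    (x₀ v₀ : EuclideanSpace ℝ (Fin n)) (N : ℕ) :
    ∃ f : ℝ → EuclideanSpace ℝ (Fin n) × EuclideanSpace ℝ (Fin n),
      f 0 = (x₀, v₀) ∧
      (∀ t ∈ Icc (-(N : ℝ)) N, HasDerivWithinAt f (V Z (f t)) (Icc (-(N : ℝ)) N) t) ∧
      (∀ t ∈ Icc (-(N : ℝ)) N,
        f t ∈ closedBall ((x₀, 0) : EuclideanSpace ℝ (Fin n) × EuclideanSpace ℝ (Fin n))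
          (‖v₀‖ * N + ‖v₀‖ + 1)) := by
  set R : ℝ := ‖v₀‖ * N + ‖v₀‖ + 1 with hRdef
  have hRpos : 0 < R := by positivity
  set c : EuclideanSpace ℝ (Fin n) × EuclideanSpace ℝ (Fin n) := (x₀, 0) with hc
  let b : ContDiffBump c := ⟨R, R + 1, hRpos, lt_add_one R⟩
  set W : EuclideanSpace ℝ (Fin n) × EuclideanSpace ℝ (Fin n) →
      EuclideanSpace ℝ (Fin n) × EuclideanSpace ℝ (Fin n) := fun p => b p • V Z p with hWdef
  have hWc1 : ContDiff ℝ 1 W := (b.contDiff : ContDiff ℝ 1 _).smul (contDiff_V Z hZ)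
  have hWsupp : HasCompactSupport W := by
    apply HasCompactSupport.intro b.hasCompactSupport.isCompact
    intro p hp
    have hb0 : b p = 0 := image_eq_zero_of_notMem_tsupport hp
    simp [hWdef, hb0]
  obtain ⟨C, hC⟩ := hWc1.continuous.bounded_above_of_compact_support hWsupp
  obtain ⟨K', hK'⟩ :=
    (hWc1.continuous_fderiv one_ne_zero).bounded_above_of_compact_support (hWsupp.fderiv (𝕜 := ℝ))
  have hlip : LipschitzWith (Real.toNNReal K') W := by
    apply lipschitzWith_of_nnnorm_fderiv_le (hWc1.differentiable one_ne_zero)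
    intro p
    simp only [← NNReal.coe_le_coe, coe_nnnorm, Real.coe_toNNReal']
    exact (hK' p).trans (le_max_left _ _)
  have hC0 : 0 ≤ C := le_trans (norm_nonneg _) (hC c)
  have hN0 : (0 : ℝ) ≤ N := Nat.cast_nonneg N
  have hpl : IsPicardLindelof (fun _ : ℝ => W)
      (⟨0, ⟨neg_nonpos.mpr hN0, hN0⟩⟩ : Icc (-(N : ℝ)) N) (x₀, v₀)
      (Real.toNNReal (C * N)) 0 (Real.toNNReal C) (Real.toNNReal K') :=
    { lipschitzOnWith := fun t _ => hlip.lipschitzOnWith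
      continuousOn := fun x _ => continuousOn_const
      norm_le := fun t _ x _ => (hC x).trans (Real.le_coe_toNNReal C)
      mul_max_le := by
        rw [Real.coe_toNNReal _ hC0, Real.coe_toNNReal _ (mul_nonneg hC0 hN0)]
        simp }
  obtain ⟨f, hf0, hf'⟩ := hpl.exists_eq_forall_mem_Icc_hasDerivWithinAt₀
  replace hf0 : f 0 = (x₀, v₀) := hf0
  set I : Set ℝ := Icc (-(N : ℝ)) N with hIdef
  have h0I : (0 : ℝ) ∈ I := ⟨neg_nonpos.mpr hN0, hN0⟩
  -- derivative of each component
  have hd1 : ∀ t ∈ I, HasDerivWithinAt (fun s => (f s).1) ((W (f t)).1) I t := fun t ht =>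
    (ContinuousLinearMap.fst ℝ (EuclideanSpace ℝ (Fin n))
      (EuclideanSpace ℝ (Fin n))).hasFDerivAt.comp_hasDerivWithinAt t (hf' t ht)
  have hd2 : ∀ t ∈ I, HasDerivWithinAt (fun s => (f s).2) ((W (f t)).2) I t := fun t ht =>
    (ContinuousLinearMap.snd ℝ (EuclideanSpace ℝ (Fin n))
      (EuclideanSpace ℝ (Fin n))).hasFDerivAt.comp_hasDerivWithinAt t (hf' t ht)
  -- conservation of speed
  have hgder : ∀ t ∈ I,
      HasDerivWithinAt (fun s => (⟪(f s).2, (f s).2⟫ : ℝ)) 0 I t := by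
    intro t ht
    have h := (hd2 t ht).inner ℝ (hd2 t ht)
    have hzero : (⟪(f t).2, (W (f t)).2⟫ : ℝ) + ⟪(W (f t)).2, (f t).2⟫ = 0 := by
      have h1 : (W (f t)).2 = b (f t) • Z (f t).1 (f t).2 := rfl
      have hsk2 : (⟪Z (f t).1 (f t).2, (f t).2⟫ : ℝ) = 0 := hskew _ _
      have hsk1 : (⟪(f t).2, Z (f t).1 (f t).2⟫ : ℝ) = 0 := by
        rw [real_inner_comm]; exact hsk2
      rw [h1, real_inner_smul_right, real_inner_smul_left, hsk1, hsk2]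
      ring
    rwa [hzero] at h
  have hgconst : ∀ t ∈ I, (⟪(f t).2, (f t).2⟫ : ℝ) = ⟪v₀, v₀⟫ := by
    intro t ht
    have := (convex_Icc (-(N : ℝ)) N).norm_image_sub_le_of_norm_hasDerivWithin_le
      (f' := fun _ => (0 : ℝ)) (C := 0) hgder (fun x _ => by simp) h0I ht
    have h0 : (⟪(f 0).2, (f 0).2⟫ : ℝ) = ⟪v₀, v₀⟫ := by rw [hf0]
    have : (⟪(f t).2, (f t).2⟫ : ℝ) = ⟪(f 0).2, (f 0).2⟫ := by
      have h' := this
      rw [zero_mul] at h'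
      exact sub_eq_zero.mp ((norm_le_zero_iff (E := ℝ)).mp h')
    rw [this, h0]
  have hspeed : ∀ t ∈ I, ‖(f t).2‖ = ‖v₀‖ := by
    intro t ht
    have h1 : ‖(f t).2‖ * ‖(f t).2‖ = ‖v₀‖ * ‖v₀‖ := by
      rw [← real_inner_self_eq_norm_mul_norm, ← real_inner_self_eq_norm_mul_norm]
      exact hgconst t ht
    exact (mul_self_inj (norm_nonneg _) (norm_nonneg _)).mp h1
  -- position bound
  have hpos : ∀ t ∈ I, ‖(f t).1 - x₀‖ ≤ ‖v₀‖ * N := by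
    intro t ht
    have hbound : ∀ s ∈ I, ‖(W (f s)).1‖ ≤ ‖v₀‖ := by
      intro s hs
      have h1 : (W (f s)).1 = b (f s) • (f s).2 := rfl
      rw [h1, norm_smul, Real.norm_eq_abs, abs_of_nonneg b.nonneg, hspeed s hs]
      calc b (f s) * ‖v₀‖ ≤ 1 * ‖v₀‖ :=
            mul_le_mul_of_nonneg_right b.le_one (norm_nonneg _)
        _ = ‖v₀‖ := one_mul _
    have := (convex_Icc (-(N : ℝ)) N).norm_image_sub_le_of_norm_hasDerivWithin_le
      (f' := fun s => (W (f s)).1) (C := ‖v₀‖) hd1 hbound h0I ht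
    have hft : ‖(f t).1 - (f 0).1‖ ≤ ‖v₀‖ * ‖t - 0‖ := this
    have h0 : (f 0).1 = x₀ := by rw [hf0]
    rw [h0, sub_zero, Real.norm_eq_abs] at hft
    refine hft.trans (mul_le_mul_of_nonneg_left ?_ (norm_nonneg _))
    exact abs_le.mpr ⟨ht.1, ht.2⟩
  -- solution stays in the ball of radius R
  have hball : ∀ t ∈ I, f t ∈ closedBall c R := by
    intro t ht
    rw [mem_closedBall, Prod.dist_eq, max_le_iff]
    constructor
    · rw [dist_eq_norm]
      exact (hpos t ht).trans (by rw [hRdef]; nlinarith [norm_nonneg v₀])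
    · rw [dist_eq_norm, sub_zero, hspeed t ht, hRdef]
      nlinarith [norm_nonneg v₀, mul_nonneg (norm_nonneg v₀) hN0]
  -- on the ball, the bump function is 1 so W = V Z
  have hWV : ∀ t ∈ I, W (f t) = V Z (f t) := by
    intro t ht
    have hb1 : b (f t) = 1 := b.one_of_mem_closedBall (hball t ht)
    simp [hWdef, hb1]
  exact ⟨f, hf0, fun t ht => (hWV t ht) ▸ hf' t ht, hball⟩

end MagneticGeodesicAux

/-- Long-time existence of magnetic geodesics: for a `C¹` field of skew-adjoint
operators `Z`, every initial condition gives rise to a magnetic geodesic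
`γ'' = Z (γ) (γ')` defined on all of `ℝ`. -/
theorem magnetic_geodesic_global_existence {n : ℕ}
    (Z : EuclideanSpace ℝ (Fin n) → (EuclideanSpace ℝ (Fin n) →L[ℝ] EuclideanSpace ℝ (Fin n)))
    (hZ : ContDiff ℝ 1 Z)
    (hskew : ∀ (x v : EuclideanSpace ℝ (Fin n)), ⟪Z x v, v⟫ = 0)
    (x₀ v₀ : EuclideanSpace ℝ (Fin n)) :
    ∃ γ γ' : ℝ → EuclideanSpace ℝ (Fin n),
      γ 0 = x₀ ∧ γ' 0 = v₀ ∧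
      (∀ t : ℝ, HasDerivAt γ (γ' t) t) ∧
      (∀ t : ℝ, HasDerivAt γ' (Z (γ t) (γ' t)) t) := by
  classical
  open Set Metric MagneticGeodesicAux in
  have hex := exists_sol Z hZ hskew x₀ v₀
  choose F hF0 hFd hFb using hex
  -- upgrade to `HasDerivAt` in the interior
  have hFdAt : ∀ (N : ℕ), ∀ t ∈ Set.Ioo (-(N : ℝ)) N,
      HasDerivAt (F N) (MagneticGeodesicAux.V Z (F N t)) t := fun N t ht =>
    (hFd N t (Set.Ioo_subset_Icc_self ht)).hasDerivAt (Icc_mem_nhds ht.1 ht.2)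
  -- uniqueness: any two of the chosen solutions agree on the common interval
  have key : ∀ N M : ℕ, N ≤ M → ∀ t : ℝ, |t| < N → F N t = F M t := by
    intro N M hNM t ht
    have hN0 : (0 : ℝ) < N := lt_of_le_of_lt (abs_nonneg t) ht
    obtain ⟨K, hK⟩ := MagneticGeodesicAux.exists_lipschitzOnWith_V Z hZ
      ((x₀, 0) : EuclideanSpace ℝ (Fin n) × EuclideanSpace ℝ (Fin n)) (‖v₀‖ * M + ‖v₀‖ + 1)
    have hsub : Metric.closedBall ((x₀, 0) : EuclideanSpace ℝ (Fin n) × EuclideanSpace ℝ (Fin n))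
        (‖v₀‖ * N + ‖v₀‖ + 1) ⊆ Metric.closedBall ((x₀, 0)) (‖v₀‖ * M + ‖v₀‖ + 1) := by
      apply Metric.closedBall_subset_closedBall
      have : (N : ℝ) ≤ M := Nat.cast_le.mpr hNM
      nlinarith [norm_nonneg v₀]
    have hIoo : Set.Ioo (-(N : ℝ)) N ⊆ Set.Ioo (-(M : ℝ)) M := by
      apply Set.Ioo_subset_Ioo <;> simp [Nat.cast_le.mpr hNM]
    have huniq := ODE_solution_unique_of_mem_Ioo
      (v := fun _ : ℝ => MagneticGeodesicAux.V Z)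
      (s := fun _ : ℝ => Metric.closedBall ((x₀, 0)) (‖v₀‖ * M + ‖v₀‖ + 1))
      (K := K) (f := F N) (g := F M) (t₀ := 0) (a := -(N : ℝ)) (b := (N : ℝ))
      (fun _ _ => hK) ⟨neg_lt_zero.mpr hN0, hN0⟩
      (fun s hs => ⟨hFdAt N s hs, hsub (hFb N s (Set.Ioo_subset_Icc_self hs))⟩)
      (fun s hs => ⟨hFdAt M s (hIoo hs),
        hFb M s (Set.Ioo_subset_Icc_self (hIoo hs))⟩)
      (by rw [hF0, hF0])
    exact huniq (abs_lt.mp ht |> fun h => ⟨h.1, h.2⟩)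
  have key' : ∀ N M : ℕ, ∀ t : ℝ, |t| < N → |t| < M → F N t = F M t := by
    intro N M t h1 h2
    rcases le_total N M with h | h
    · exact key N M h t h1
    · exact (key M N h t h2).symm
  -- the global solution
  set G : ℝ → EuclideanSpace ℝ (Fin n) × EuclideanSpace ℝ (Fin n) :=
    fun t => F (⌊|t|⌋₊ + 1) t with hGdef
  have hGt : ∀ t : ℝ, |t| < (⌊|t|⌋₊ + 1 : ℕ) := by
    intro t
    push_cast
    exact Nat.lt_floor_add_one |t|
  have hG : ∀ t : ℝ, HasDerivAt G (MagneticGeodesicAux.V Z (G t)) t := by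
    intro t
    set N : ℕ := ⌊|t|⌋₊ + 1 with hNdef
    have htN : |t| < N := hGt t
    have htIoo : t ∈ Set.Ioo (-(N : ℝ)) N := by
      have := abs_lt.mp htN; exact ⟨this.1, this.2⟩
    have hEv : G =ᶠ[nhds t] F N := by
      have hopen : Set.Ioo (-(N : ℝ)) N ∈ nhds t := Ioo_mem_nhds htIoo.1 htIoo.2
      filter_upwards [hopen] with s hs
      have hsN : |s| < N := abs_lt.mpr ⟨hs.1, hs.2⟩
      exact key' (⌊|s|⌋₊ + 1) N s (hGt s) hsN
    have hG' : HasDerivAt G (MagneticGeodesicAux.V Z (F N t)) t :=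
      (hFdAt N t htIoo).congr_of_eventuallyEq hEv
    have : F N t = G t := rfl
    rwa [this] at hG'
  refine ⟨fun t => (G t).1, fun t => (G t).2, ?_, ?_, ?_, ?_⟩
  · show (G 0).1 = x₀
    have : G 0 = F 1 0 := by
      simp only [hGdef, abs_zero, Nat.floor_zero]
    rw [this, hF0]
  · show (G 0).2 = v₀
    have : G 0 = F 1 0 := by
      simp only [hGdef, abs_zero, Nat.floor_zero]
    rw [this, hF0]
  · intro t
    have := (ContinuousLinearMap.fst ℝ (EuclideanSpace ℝ (Fin n))
      (EuclideanSpace ℝ (Fin n))).hasFDerivAt.comp_hasDerivAt t (hG t)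
    exact this
  · intro t
    have := (ContinuousLinearMap.snd ℝ (EuclideanSpace ℝ (Fin n))
      (EuclideanSpace ℝ (Fin n))).hasFDerivAt.comp_hasDerivAt t (hG t)
    exact this
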